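/- Let n ∈ ℕ and let γ₂, γ₃, c* be positive real constants. On a probability space (Ω, F, P), let J_n and Ĵ_n be random finite subsets of I_n = {1,…,n} (measurable set-valued maps), let Ω_n be a measurable event, let Λ_n be a nonnegative real random variable, and let (U_j)_{j∈I_n} be real random variables. Assume that pointwise on Ω_n the symmetric difference satisfies #(J_n Δ Ĵ_n) ≤ c*·n^{1−γ₂} + Λ_n. Define D_n = n^{γ₃} | n^{−1} Σ_{j∈J_n} U_j − n^{−1} Σ_{j∈Ĵ_n} U_j |. Then for all p, p₁ with 1 < p < p₁: ‖D_n‖_p ≤ ( c*·n^{γ₃−γ₂} + n^{−1+γ₃} ‖Λ_n‖_{p₁} ) · ‖ max_{j≤n} |U_j| ‖_{p p₁ (p₁−p)^{−1}} + n^{γ₃} ‖ max_{j≤n} |U_j| · 1_{Ω_n^c} ‖_p. -/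

import Mathlib

open MeasureTheory Filter Finset
open scoped ENNReal symmDiff

section helpers
variable {α : Type*} [MeasurableSpace α]

lemma holder_one_sided (μ : Measure α) {s t : ℝ}
    (hst : s.HolderConjugate t) {f g : α → ℝ≥0∞} (hf : Measurable f) (hftop : ∀ x, f x ≠ ∞) :
    ∫⁻ x, f x * g x ∂μ ≤ (∫⁻ x, f x ^ s ∂μ) ^ (1/s) * (∫⁻ x, g x ^ t ∂μ) ^ (1/t) := by
  obtain ⟨h, hmeas, hle, heq⟩ := exists_measurable_le_lintegral_eq μ (fun x => f x * g x)
  set g0 : α → ℝ≥0∞ := fun x => h x / f x with hg0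
  have hle2 : ∀ x, h x ≤ f x * g0 x := by
    intro x
    rcases eq_or_ne (f x) 0 with h0 | h0
    · have hx : h x = 0 := le_antisymm (by simpa [h0] using hle x) zero_le
      simp [hx]
    · simp only [hg0]
      rw [ENNReal.mul_div_cancel h0 (hftop x)]
  have hg0le : ∀ x, g0 x ≤ g x := fun x => ENNReal.div_le_of_le_mul' (hle x)
  calc ∫⁻ x, f x * g x ∂μ = ∫⁻ x, h x ∂μ := heq
    _ ≤ ∫⁻ x, f x * g0 x ∂μ := lintegral_mono hle2
    _ ≤ (∫⁻ x, f x ^ s ∂μ) ^ (1/s) * (∫⁻ x, g0 x ^ t ∂μ) ^ (1/t) :=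
        ENNReal.lintegral_mul_le_Lp_mul_Lq μ hst hf.aemeasurable
          (hmeas.div hf).aemeasurable
    _ ≤ (∫⁻ x, f x ^ s ∂μ) ^ (1/s) * (∫⁻ x, g x ^ t ∂μ) ^ (1/t) := by
        exact mul_le_mul_right (ENNReal.rpow_le_rpow
          (lintegral_mono fun x => ENNReal.rpow_le_rpow (hg0le x) hst.symm.nonneg)
          (one_div_nonneg.2 hst.symm.nonneg)) _

lemma eLpNorm_mul_le_mul (μ : Measure α) {p s t : ℝ}
    (hp : 0 < p) (hst : s.HolderConjugate t) (φ M : α → ℝ) (hφ : Measurable φ) :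
    eLpNorm (fun x => φ x * M x) (ENNReal.ofReal p) μ ≤
      eLpNorm φ (ENNReal.ofReal (p * s)) μ * eLpNorm M (ENNReal.ofReal (p * t)) μ := by
  have hps : 0 < p * s := mul_pos hp hst.pos
  have hpt : 0 < p * t := mul_pos hp hst.symm.pos
  rw [eLpNorm_eq_lintegral_rpow_enorm_toReal (by simpa using hp) ENNReal.ofReal_ne_top,
    eLpNorm_eq_lintegral_rpow_enorm_toReal (by simpa using hps) ENNReal.ofReal_ne_top,
    eLpNorm_eq_lintegral_rpow_enorm_toReal (by simpa using hpt) ENNReal.ofReal_ne_top,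
    ENNReal.toReal_ofReal hp.le, ENNReal.toReal_ofReal hps.le, ENNReal.toReal_ofReal hpt.le]
  have key : ∫⁻ x, (‖φ x * M x‖₊ : ℝ≥0∞) ^ p ∂μ ≤
      (∫⁻ x, (‖φ x‖₊ : ℝ≥0∞) ^ (p * s) ∂μ) ^ (1/s) *
        (∫⁻ x, (‖M x‖₊ : ℝ≥0∞) ^ (p * t) ∂μ) ^ (1/t) := by
    have := holder_one_sided μ hst
      (f := fun x => (‖φ x‖₊ : ℝ≥0∞) ^ p) (g := fun x => (‖M x‖₊ : ℝ≥0∞) ^ p)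
      (hf := (hφ.nnnorm.coe_nnreal_ennreal).pow_const p)
      (hftop := fun x => ENNReal.rpow_ne_top_of_nonneg hp.le ENNReal.coe_ne_top)
    calc ∫⁻ x, (‖φ x * M x‖₊ : ℝ≥0∞) ^ p ∂μ
        = ∫⁻ x, ((‖φ x‖₊ : ℝ≥0∞) ^ p) * ((‖M x‖₊ : ℝ≥0∞) ^ p) ∂μ := by
          congr 1 with x
          rw [nnnorm_mul, ENNReal.coe_mul, ENNReal.mul_rpow_of_nonneg _ _ hp.le]
      _ ≤ (∫⁻ x, ((‖φ x‖₊ : ℝ≥0∞) ^ p) ^ s ∂μ) ^ (1/s) *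
            (∫⁻ x, ((‖M x‖₊ : ℝ≥0∞) ^ p) ^ t ∂μ) ^ (1/t) := this
      _ = (∫⁻ x, (‖φ x‖₊ : ℝ≥0∞) ^ (p * s) ∂μ) ^ (1/s) *
            (∫⁻ x, (‖M x‖₊ : ℝ≥0∞) ^ (p * t) ∂μ) ^ (1/t) := by
          simp_rw [← ENNReal.rpow_mul]
  calc (∫⁻ x, (‖φ x * M x‖₊ : ℝ≥0∞) ^ p ∂μ) ^ (1/p)
      ≤ ((∫⁻ x, (‖φ x‖₊ : ℝ≥0∞) ^ (p * s) ∂μ) ^ (1/s) *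
          (∫⁻ x, (‖M x‖₊ : ℝ≥0∞) ^ (p * t) ∂μ) ^ (1/t)) ^ (1/p) := by
        exact ENNReal.rpow_le_rpow key (by positivity)
    _ = (∫⁻ x, (‖φ x‖₊ : ℝ≥0∞) ^ (p * s) ∂μ) ^ (1/(p*s)) *
          (∫⁻ x, (‖M x‖₊ : ℝ≥0∞) ^ (p * t) ∂μ) ^ (1/(p*t)) := by
        rw [ENNReal.mul_rpow_of_nonneg _ _ (by positivity), ← ENNReal.rpow_mul,
          ← ENNReal.rpow_mul]
        congr 1 <;> rw [div_mul_div_comm, one_mul, mul_comm]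

end helpers

theorem stmt_9 {Ω : Type*} [MeasurableSpace Ω] (P : Measure Ω) [IsProbabilityMeasure P]
    (n : ℕ) (γ₂ γ₃ cstar : ℝ) (hγ₂ : 0 < γ₂) (hγ₃ : 0 < γ₃) (hcstar : 0 < cstar)
    (J Jhat : Ω → Finset ℕ)
    (hJsub : ∀ ω, J ω ⊆ Finset.Icc 1 n) (hJhatsub : ∀ ω, Jhat ω ⊆ Finset.Icc 1 n)
    (hJmeas : ∀ j, MeasurableSet {ω : Ω | j ∈ J ω})
    (hJhatmeas : ∀ j, MeasurableSet {ω : Ω | j ∈ Jhat ω})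
    (Ωn : Set Ω) (hΩn : MeasurableSet Ωn)
    (Λ : Ω → ℝ) (hΛ0 : ∀ ω, 0 ≤ Λ ω) (hΛmeas : Measurable Λ)
    (U : ℕ → Ω → ℝ)
    (hsd : ∀ ω ∈ Ωn, (((J ω) ∆ (Jhat ω)).card : ℝ) ≤ cstar * (n : ℝ) ^ (1 - γ₂) + Λ ω)
    (p p₁ : ℝ) (hp : 1 < p) (hpp₁ : p < p₁) :
    eLpNorm (fun ω =>
        (n : ℝ) ^ γ₃ *
          |(1 / (n : ℝ)) * ∑ j ∈ J ω, U j ω - (1 / (n : ℝ)) * ∑ j ∈ Jhat ω, U j ω|)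
        (ENNReal.ofReal p) P
      ≤ (ENNReal.ofReal (cstar * (n : ℝ) ^ (γ₃ - γ₂))
            + ENNReal.ofReal ((n : ℝ) ^ (-1 + γ₃)) * eLpNorm Λ (ENNReal.ofReal p₁) P) *
          eLpNorm (fun ω => ⨆ j ∈ Finset.Icc 1 n, |U j ω|)
            (ENNReal.ofReal (p * p₁ / (p₁ - p))) P
        + ENNReal.ofReal ((n : ℝ) ^ γ₃) *
          eLpNorm (fun ω =>
              (⨆ j ∈ Finset.Icc 1 n, |U j ω|) * Set.indicator Ωnᶜ (fun _ => (1 : ℝ)) ω)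
            (ENNReal.ofReal p) P := by
  have hp0 : (0:ℝ) < p := lt_trans zero_lt_one hp
  have hp₁0 : (0:ℝ) < p₁ := lt_trans hp0 hpp₁
  -- trivial case n = 0
  rcases Nat.eq_zero_or_pos n with hn0 | hnpos
  · subst hn0
    have hzero : (fun ω : Ω => (0:ℕ) • (0:ℝ)) = 0 := rfl
    have hfun : (fun ω : Ω =>
        ((0:ℕ) : ℝ) ^ γ₃ *
          |(1 / ((0:ℕ) : ℝ)) * ∑ j ∈ J ω, U j ω - (1 / ((0:ℕ) : ℝ)) * ∑ j ∈ Jhat ω, U j ω|)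
        = (0 : Ω → ℝ) := by
      funext ω
      have h1 : J ω = ∅ := Finset.subset_empty.mp (by simpa using hJsub ω)
      have h2 : Jhat ω = ∅ := Finset.subset_empty.mp (by simpa using hJhatsub ω)
      simp [h1, h2]
    rw [hfun, eLpNorm_zero]
    exact zero_le
  have hn' : (0:ℝ) < (n:ℝ) := by exact_mod_cast hnpos
  -- notation
  set M : Ω → ℝ := fun ω => ⨆ j ∈ Finset.Icc 1 n, |U j ω| with hMdef
  set c₁ : ℝ := cstar * (n : ℝ) ^ (γ₃ - γ₂) with hc₁
  set c₂ : ℝ := (n : ℝ) ^ (-1 + γ₃) with hc₂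
  have hc₁0 : 0 < c₁ := mul_pos hcstar (Real.rpow_pos_of_pos hn' _)
  have hc₂0 : 0 < c₂ := Real.rpow_pos_of_pos hn' _
  set φ : Ω → ℝ := fun ω => c₁ + c₂ * Λ ω with hφdef
  set H : Ω → ℝ := fun ω => M ω * Set.indicator Ωnᶜ (fun _ => (1 : ℝ)) ω with hHdef
  set D : Ω → ℝ := fun ω => (n : ℝ) ^ γ₃ *
      |(1 / (n : ℝ)) * ∑ j ∈ J ω, U j ω - (1 / (n : ℝ)) * ∑ j ∈ Jhat ω, U j ω| with hDdef
  -- basic facts about M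
  have hM0 : ∀ ω, 0 ≤ M ω := fun ω =>
    Real.iSup_nonneg fun j => Real.iSup_nonneg fun _ => abs_nonneg _
  have hMle : ∀ ω, ∀ j ∈ Finset.Icc 1 n, |U j ω| ≤ M ω := by
    intro ω j hj
    have hBdd : BddAbove (Set.range fun j => ⨆ _ : j ∈ Finset.Icc 1 n, |U j ω|) := by
      refine ⟨∑ i ∈ Finset.Icc 1 n, |U i ω|, ?_⟩
      rintro x ⟨i, rfl⟩
      exact Real.iSup_le
        (fun hi => Finset.single_le_sum (fun k _ => abs_nonneg (U k ω)) hi)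
        (Finset.sum_nonneg fun k _ => abs_nonneg _)
    have h := le_ciSup hBdd j
    rw [ciSup_pos hj] at h
    exact h
  -- pointwise bound by the symmetric difference
  have habs : ∀ ω, |∑ j ∈ J ω, U j ω - ∑ j ∈ Jhat ω, U j ω|
      ≤ ((J ω ∆ Jhat ω).card : ℝ) * M ω := by
    intro ω
    have hsubΔ : J ω ∆ Jhat ω ⊆ Finset.Icc 1 n := by
      intro j hj
      rcases Finset.mem_symmDiff.mp hj with ⟨hj1, _⟩ | ⟨hj1, _⟩
      · exact hJsub ω hj1
      · exact hJhatsub ω hj1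
    calc |∑ j ∈ J ω, U j ω - ∑ j ∈ Jhat ω, U j ω|
        = |∑ j ∈ J ω \ Jhat ω, U j ω - ∑ j ∈ Jhat ω \ J ω, U j ω| := by
          rw [Finset.sum_sdiff_sub_sum_sdiff]
      _ ≤ |∑ j ∈ J ω \ Jhat ω, U j ω| + |∑ j ∈ Jhat ω \ J ω, U j ω| := abs_sub _ _
      _ ≤ (∑ j ∈ J ω \ Jhat ω, |U j ω|) + ∑ j ∈ Jhat ω \ J ω, |U j ω| :=
          add_le_add (Finset.abs_sum_le_sum_abs _ _) (Finset.abs_sum_le_sum_abs _ _)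
      _ = ∑ j ∈ J ω ∆ Jhat ω, |U j ω| := by
          rw [symmDiff_def, Finset.sup_eq_union, Finset.sum_union disjoint_sdiff_sdiff]
      _ ≤ (J ω ∆ Jhat ω).card • M ω :=
          Finset.sum_le_card_nsmul _ _ _ (fun j hj => hMle ω j (hsubΔ hj))
      _ = ((J ω ∆ Jhat ω).card : ℝ) * M ω := nsmul_eq_mul _ _
  have hDcard : ∀ ω, D ω ≤ (n:ℝ) ^ γ₃ * ((1/(n:ℝ)) * (((J ω ∆ Jhat ω).card : ℝ) * M ω)) := by
    intro ω
    have : D ω = (n:ℝ) ^ γ₃ * ((1/(n:ℝ)) * |∑ j ∈ J ω, U j ω - ∑ j ∈ Jhat ω, U j ω|) := by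
      rw [hDdef]
      simp only []
      rw [← mul_sub, abs_mul, abs_of_nonneg (by positivity : (0:ℝ) ≤ 1/(n:ℝ))]
    rw [this]
    gcongr
    exact habs ω
  -- algebra with rpow
  have h1n : (1:ℝ)/(n:ℝ) = (n:ℝ) ^ (-1:ℝ) := by
    rw [Real.rpow_neg_one, one_div]
  have h2 : (n:ℝ) ^ γ₃ * (n:ℝ) ^ (-1:ℝ) = c₂ := by
    rw [hc₂, ← Real.rpow_add hn']; congr 1; ring
  have h3 : c₂ * (n:ℝ) ^ (1-γ₂) = (n:ℝ) ^ (γ₃ - γ₂) := by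
    rw [hc₂, ← Real.rpow_add hn']; congr 1; ring
  have halg : ∀ l x : ℝ, (n:ℝ) ^ γ₃ * ((1/(n:ℝ)) * ((cstar * (n:ℝ) ^ (1-γ₂) + l) * x))
      = (c₁ + c₂ * l) * x := by
    intro l x
    rw [h1n, hc₁, ← h3, ← h2]
    ring
  -- pointwise bound on Ωn
  have hDΩn : ∀ ω ∈ Ωn, D ω ≤ φ ω * M ω := by
    intro ω hω
    calc D ω ≤ (n:ℝ) ^ γ₃ * ((1/(n:ℝ)) * (((J ω ∆ Jhat ω).card : ℝ) * M ω)) := hDcard ω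
      _ ≤ (n:ℝ) ^ γ₃ * ((1/(n:ℝ)) * ((cstar * (n:ℝ) ^ (1-γ₂) + Λ ω) * M ω)) := by
          gcongr <;> first
            | positivity
            | exact hM0 ω
            | exact hsd ω hω
      _ = φ ω * M ω := halg (Λ ω) (M ω)
  -- pointwise bound on Ωnᶜ
  have hDΩnc : ∀ ω ∈ Ωnᶜ, D ω ≤ (n:ℝ) ^ γ₃ * H ω := by
    intro ω hω
    have hcard : ((J ω ∆ Jhat ω).card : ℝ) ≤ (n:ℝ) := by
      have hsubΔ : J ω ∆ Jhat ω ⊆ Finset.Icc 1 n := by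
        intro j hj
        rcases Finset.mem_symmDiff.mp hj with ⟨hj1, _⟩ | ⟨hj1, _⟩
        · exact hJsub ω hj1
        · exact hJhatsub ω hj1
      have := Finset.card_le_card hsubΔ
      have hIcc : (Finset.Icc 1 n).card = n := by
        rw [Nat.card_Icc]; omega
      exact_mod_cast hIcc ▸ this
    calc D ω ≤ (n:ℝ) ^ γ₃ * ((1/(n:ℝ)) * (((J ω ∆ Jhat ω).card : ℝ) * M ω)) := hDcard ω
      _ ≤ (n:ℝ) ^ γ₃ * ((1/(n:ℝ)) * ((n:ℝ) * M ω)) := by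
          gcongr <;> first
            | positivity
            | exact hM0 ω
            | exact hcard
      _ = (n:ℝ) ^ γ₃ * H ω := by
          rw [hHdef]
          simp only [Set.indicator_of_mem hω]
          field_simp
  have hD0 : ∀ ω, 0 ≤ D ω := by
    intro ω
    rw [hDdef]
    positivity
  -- nnnorm comparison helper
  have hnn : ∀ x y : ℝ, 0 ≤ x → x ≤ y → (‖x‖₊ : ℝ≥0∞) ≤ (‖y‖₊ : ℝ≥0∞) := by
    intro x y hx hxy
    rw [ENNReal.coe_le_coe, ← NNReal.coe_le_coe, coe_nnnorm, coe_nnnorm,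
      Real.norm_eq_abs, Real.norm_eq_abs, abs_of_nonneg hx, abs_of_nonneg (hx.trans hxy)]
    exact hxy
  -- main splitting
  have hq0 : (ENNReal.ofReal p) ≠ 0 := by simp [ENNReal.ofReal_eq_zero]; linarith
  rw [eLpNorm_eq_lintegral_rpow_enorm_toReal hq0 ENNReal.ofReal_ne_top, ENNReal.toReal_ofReal hp0.le]
  set A : ℝ≥0∞ := ∫⁻ ω, (‖φ ω * M ω‖₊ : ℝ≥0∞) ^ p ∂P with hA
  set B : ℝ≥0∞ := ∫⁻ ω, (‖(n:ℝ) ^ γ₃ * H ω‖₊ : ℝ≥0∞) ^ p ∂P with hB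
  have hsplit : ∫⁻ ω, (‖D ω‖₊ : ℝ≥0∞) ^ p ∂P ≤ A + B := by
    rw [← lintegral_add_compl (fun ω => (‖D ω‖₊ : ℝ≥0∞) ^ p) hΩn]
    refine add_le_add ?_ ?_
    · rw [← lintegral_indicator hΩn]
      refine lintegral_mono fun ω => ?_
      by_cases hω : ω ∈ Ωn
      · rw [Set.indicator_of_mem hω]
        exact ENNReal.rpow_le_rpow (hnn _ _ (hD0 ω) (hDΩn ω hω)) hp0.le
      · rw [Set.indicator_of_notMem hω]
        exact zero_le
    · rw [← lintegral_indicator hΩn.compl]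
      refine lintegral_mono fun ω => ?_
      by_cases hω : ω ∈ Ωnᶜ
      · rw [Set.indicator_of_mem hω]
        exact ENNReal.rpow_le_rpow (hnn _ _ (hD0 ω) (hDΩnc ω hω)) hp0.le
      · rw [Set.indicator_of_notMem hω]
        exact zero_le
  -- conjugate exponents
  have hst : (p₁/p).HolderConjugate (p₁/(p₁-p)) := by
    rw [Real.holderConjugate_iff]
    constructor
    · exact (one_lt_div hp0).mpr hpp₁
    · rw [inv_div, inv_div, ← add_div, add_sub_cancel, div_self (ne_of_gt hp₁0)]
  have hps : p * (p₁/p) = p₁ := by field_simp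
  have hpt : p * (p₁/(p₁-p)) = p * p₁ / (p₁ - p) := by ring
  have hφmeas : Measurable φ := (hΛmeas.const_mul c₂).const_add c₁
  have hHolder : eLpNorm (fun ω => φ ω * M ω) (ENNReal.ofReal p) P ≤
      eLpNorm φ (ENNReal.ofReal p₁) P *
        eLpNorm M (ENNReal.ofReal (p * p₁ / (p₁ - p))) P := by
    have := eLpNorm_mul_le_mul P hp0 hst φ M hφmeas
    rwa [hps, hpt] at this
  -- bound on the norm of φ
  have hPne : P ≠ 0 := IsProbabilityMeasure.ne_zero P
  have hp₁q0 : (ENNReal.ofReal p₁) ≠ 0 := by simp [ENNReal.ofReal_eq_zero]; linarith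
  have hφbound : eLpNorm φ (ENNReal.ofReal p₁) P ≤
      ENNReal.ofReal c₁ + ENNReal.ofReal c₂ * eLpNorm Λ (ENNReal.ofReal p₁) P := by
    have h1p₁ : (1:ℝ≥0∞) ≤ ENNReal.ofReal p₁ := by
      rw [← ENNReal.ofReal_one]
      exact ENNReal.ofReal_le_ofReal (le_of_lt (lt_trans hp hpp₁))
    have htri := eLpNorm_add_le (μ := P) (f := fun _ : Ω => c₁) (g := fun ω => c₂ * Λ ω)
      aestronglyMeasurable_const ((hΛmeas.const_mul c₂).aestronglyMeasurable) h1p₁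
    have hφeq : φ = (fun _ => c₁) + fun ω => c₂ * Λ ω := rfl
    rw [hφeq]
    refine le_trans htri ?_
    have hconst : eLpNorm (fun _ : Ω => c₁) (ENNReal.ofReal p₁) P = ENNReal.ofReal c₁ := by
      rw [eLpNorm_const c₁ hp₁q0 hPne, measure_univ, ENNReal.one_rpow, mul_one,
        Real.enorm_eq_ofReal hc₁0.le]
    have hsmul : eLpNorm (fun ω => c₂ * Λ ω) (ENNReal.ofReal p₁) P
        = ENNReal.ofReal c₂ * eLpNorm Λ (ENNReal.ofReal p₁) P := by
      have : (fun ω => c₂ * Λ ω) = c₂ • Λ := rfl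
      rw [this, eLpNorm_const_smul, Real.enorm_eq_ofReal hc₂0.le]
    rw [hconst, hsmul]
  have hsmulH : eLpNorm (fun ω => (n:ℝ) ^ γ₃ * H ω) (ENNReal.ofReal p) P
      = ENNReal.ofReal ((n:ℝ) ^ γ₃) * eLpNorm H (ENNReal.ofReal p) P := by
    have : (fun ω => (n:ℝ) ^ γ₃ * H ω) = ((n:ℝ) ^ γ₃) • H := rfl
    rw [this, eLpNorm_const_smul, Real.enorm_eq_ofReal (Real.rpow_nonneg hn'.le _)]
  -- put everything together
  calc (∫⁻ ω, (‖D ω‖₊ : ℝ≥0∞) ^ p ∂P) ^ (1/p)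
      ≤ (A + B) ^ (1/p) := ENNReal.rpow_le_rpow hsplit (by positivity)
    _ ≤ A ^ (1/p) + B ^ (1/p) :=
        ENNReal.rpow_add_le_add_rpow A B (by positivity) (by
          rw [div_le_one hp0]; linarith)
    _ = eLpNorm (fun ω => φ ω * M ω) (ENNReal.ofReal p) P
          + eLpNorm (fun ω => (n:ℝ) ^ γ₃ * H ω) (ENNReal.ofReal p) P := by
        rw [eLpNorm_eq_lintegral_rpow_enorm_toReal hq0 ENNReal.ofReal_ne_top,
          eLpNorm_eq_lintegral_rpow_enorm_toReal hq0 ENNReal.ofReal_ne_top,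
          ENNReal.toReal_ofReal hp0.le]
        rfl
    _ ≤ (ENNReal.ofReal c₁ + ENNReal.ofReal c₂ * eLpNorm Λ (ENNReal.ofReal p₁) P) *
          eLpNorm M (ENNReal.ofReal (p * p₁ / (p₁ - p))) P
        + ENNReal.ofReal ((n:ℝ) ^ γ₃) * eLpNorm H (ENNReal.ofReal p) P := by
        rw [hsmulH]
        exact add_le_add (le_trans hHolder (mul_le_mul_left hφbound _)) le_rfl
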